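/- Let ndist_γ be a premetric. If ndist_γ satisfies the triangle inequality on Σ*, then for all a,b ∈ Σ: max{γ(a,‐), γ(‐,a)} ≤ γ(b,‐) + γ(‐,b). -/

import Mathlib

open List

/-- A scoring matrix on alphabet `σ`; `none` represents the space symbol `‐`.
The value at `(none, none)` is irrelevant (never used on admissible columns). -/
abbrev Scoring (σ : Type*) := Option σ → Option σ → ℝ

/-- `A` is an alignment of the sequences `s` and `t`: a list of columns over
`Σ₋ × Σ₋` with no column `(‐,‐)`, whose first (resp. second) components with
spaces removed spell `s` (resp. `t`). -/
def IsAlignment {σ : Type*} (A : List (Option σ × Option σ)) (s t : List σ) : Prop :=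
  (∀ c ∈ A, c ≠ ((none : Option σ), (none : Option σ))) ∧
  A.filterMap Prod.fst = s ∧ A.filterMap Prod.snd = t

/-- The score of an alignment: the sum of `γ` over its columns. -/
def alignScore {σ : Type*} (γ : Scoring σ) (A : List (Option σ × Option σ)) : ℝ :=
  (A.map fun c => γ c.1 c.2).sum

/-- The weighted edit distance: minimum alignment score. -/
noncomputable def editDist {σ : Type*} (γ : Scoring σ) (s t : List σ) : ℝ :=
  sInf {x | ∃ A, IsAlignment A s t ∧ alignScore γ A = x}

/-- The normalized edit distance: minimum normalized alignment score
(score divided by number of columns); for `s = t = ε` it is `0`. -/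
noncomputable def ndist {σ : Type*} (γ : Scoring σ) (s t : List σ) : ℝ :=
  sInf {x | ∃ A, IsAlignment A s t ∧ alignScore γ A / (A.length : ℝ) = x}

/-- A walk in the digraph `D(γ)`: a list of vertices of `Σ₋` in which the
space `‐` never follows the space. -/
def IsWalkSeq {σ : Type*} (W : List (Option σ)) : Prop :=
  W.Chain' (fun a b => ¬(a = none ∧ b = none))

/-- The weight of a walk: the sum of the weights of its consecutive arcs. -/
def walkWeight {σ : Type*} (γ : Scoring σ) (W : List (Option σ)) : ℝ :=
  ((W.zip W.tail).map fun p => γ p.1 p.2).sum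

/-- `D(γ)` has a cycle of negative total weight (cycles start and end at a
vertex of `Σ`). -/
def HasNegCycle {σ : Type*} (γ : Scoring σ) : Prop :=
  ∃ (a : σ) (W : List (Option σ)),
    IsWalkSeq (some a :: (W ++ [some a])) ∧
    walkWeight γ (some a :: (W ++ [some a])) < 0

/-- The shortest-walk distance from `x` to `y` in `D(γ)`. -/
noncomputable def walkDist {σ : Type*} (γ : Scoring σ) (x y : Option σ) : ℝ :=
  sInf {w | ∃ W : List (Option σ), IsWalkSeq W ∧ W.head? = some x ∧
    W.getLast? = some y ∧ walkWeight γ W = w}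

/-- A column of an extended alignment: a nonempty sequence over `Σ₋`, with at
least one non-space symbol, no two consecutive spaces, and not having a space
at both ends. -/
def IsExtCol {σ : Type*} (c : List (Option σ)) : Prop :=
  c ≠ [] ∧ (∃ x ∈ c, x ≠ none) ∧
  c.Chain' (fun a b => ¬(a = none ∧ b = none)) ∧
  ¬(c.head? = some none ∧ c.getLast? = some none)

/-- An extended alignment of `s, t`: a list of admissible columns whose first
symbols (spaces removed) spell `s` and whose last symbols spell `t`. -/
def IsExtAlignment {σ : Type*} (E : List (List (Option σ))) (s t : List σ) : Prop :=
  (∀ c ∈ E, IsExtCol c) ∧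
  E.filterMap (fun c => c.head?.bind id) = s ∧
  E.filterMap (fun c => c.getLast?.bind id) = t

/-- The extended edit distance: minimum total score over extended alignments,
where the score of a column is the sum of `γ` over its consecutive pairs. -/
noncomputable def edist {σ : Type*} (γ : Scoring σ) (s t : List σ) : ℝ :=
  sInf {x | ∃ E, IsExtAlignment E s t ∧ (E.map (walkWeight γ)).sum = x}

/-- `f` is a premetric: `f x x = 0` and `f x y ≥ 0`. -/
def IsPremetric {σ : Type*} (f : List σ → List σ → ℝ) : Prop :=
  (∀ s, f s s = 0) ∧ (∀ s t, 0 ≤ f s t)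

section Aux
variable {σ : Type*} [Fintype σ] (γ : Scoring σ)

noncomputable def gmin : ℝ :=
  min 0 (Finset.univ.inf' ⟨(none, none), Finset.mem_univ _⟩
    (fun p : Option σ × Option σ => γ p.1 p.2))

lemma gmin_le (x y : Option σ) : gmin γ ≤ γ x y :=
  le_trans (min_le_right _ _) (Finset.inf'_le _ (Finset.mem_univ (x, y)))

lemma bdd (s t : List σ) :
    BddBelow {x | ∃ A, IsAlignment A s t ∧ alignScore γ A / (A.length : ℝ) = x} := by
  refine ⟨gmin γ, ?_⟩
  rintro x ⟨A, hA, rfl⟩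
  rcases eq_or_ne A [] with rfl | hne
  · simp [alignScore, gmin]
  · have hlen : (0:ℝ) < A.length := by
      exact_mod_cast List.length_pos_iff.mpr hne
    rw [le_div_iff₀ hlen]
    have : (A.map fun c => γ c.1 c.2).length • gmin γ ≤ alignScore γ A := by
      apply List.card_nsmul_le_sum
      intro x hx
      simp only [List.mem_map] at hx
      obtain ⟨c, _, rfl⟩ := hx
      exact gmin_le γ _ _
    simpa [nsmul_eq_mul, mul_comm] using this

lemma ndist_le {s t : List σ} {A : List (Option σ × Option σ)} (hA : IsAlignment A s t) :
    ndist γ s t ≤ alignScore γ A / (A.length : ℝ) :=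
  csInf_le (bdd γ s t) ⟨A, hA, rfl⟩

lemma align_of_nil_right {A : List (Option σ × Option σ)} {s : List σ}
    (h : IsAlignment A s []) : A = s.map fun x => (some x, none) := by
  obtain ⟨h1, h2, h3⟩ := h
  subst h2
  rw [List.filterMap_eq_nil_iff] at h3
  induction A with
  | nil => rfl
  | cons c A ih =>
    rcases c with ⟨c1, c2⟩
    have hc2 : c2 = none := h3 (c1, c2) (by simp)
    subst hc2
    obtain ⟨x, rfl⟩ : ∃ x, c1 = some x := by
      cases c1 with
      | none => exact absurd rfl (h1 (none, none) (by simp))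
      | some x => exact ⟨x, rfl⟩
    have hA := ih (fun c hc => h1 c (by simp [hc])) (fun c hc => h3 c (by simp [hc]))
    simp only [List.filterMap_cons, List.map_cons]
    rw [← hA]

lemma align_of_nil_left {A : List (Option σ × Option σ)} {t : List σ}
    (h : IsAlignment A [] t) : A = t.map fun x => (none, some x) := by
  obtain ⟨h1, h2, h3⟩ := h
  subst h3
  rw [List.filterMap_eq_nil_iff] at h2
  induction A with
  | nil => rfl
  | cons c A ih =>
    rcases c with ⟨c1, c2⟩
    have hc1 : c1 = none := h2 (c1, c2) (by simp)
    subst hc1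
    obtain ⟨x, rfl⟩ : ∃ x, c2 = some x := by
      cases c2 with
      | none => exact absurd rfl (h1 (none, none) (by simp))
      | some x => exact ⟨x, rfl⟩
    have hA := ih (fun c hc => h1 c (by simp [hc])) (fun c hc => h2 c (by simp [hc]))
    simp only [List.filterMap_cons, List.map_cons]
    rw [← hA]

lemma isAlignment_nil_right (s : List σ) :
    IsAlignment (s.map fun x => ((some x : Option σ), (none : Option σ))) s [] := by
  refine ⟨?_, ?_, ?_⟩ <;> simp [List.filterMap_map, Function.comp_def]

lemma isAlignment_nil_left (t : List σ) :
    IsAlignment (t.map fun x => ((none : Option σ), (some x : Option σ))) [] t := by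
  refine ⟨?_, ?_, ?_⟩ <;> simp [List.filterMap_map, Function.comp_def]

lemma ndist_nil_right (s : List σ) (hs : s ≠ []) :
    ndist γ s [] = (s.map fun x => γ (some x) none).sum / s.length := by
  unfold ndist
  have : {x | ∃ A, IsAlignment A s [] ∧ alignScore γ A / (A.length : ℝ) = x}
      = {(s.map fun x => γ (some x) none).sum / s.length} := by
    ext x
    constructor
    · rintro ⟨A, hA, rfl⟩
      rw [align_of_nil_right hA]
      simp [alignScore, List.map_map, Function.comp_def]
    · rintro rfl
      exact ⟨_, isAlignment_nil_right s, by simp [alignScore, List.map_map, Function.comp_def]⟩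
  rw [this, csInf_singleton]

lemma ndist_nil_left (t : List σ) (ht : t ≠ []) :
    ndist γ [] t = (t.map fun x => γ none (some x)).sum / t.length := by
  unfold ndist
  have : {x | ∃ A, IsAlignment A [] t ∧ alignScore γ A / (A.length : ℝ) = x}
      = {(t.map fun x => γ none (some x)).sum / t.length} := by
    ext x
    constructor
    · rintro ⟨A, hA, rfl⟩
      rw [align_of_nil_left hA]
      simp [alignScore, List.map_map, Function.comp_def]
    · rintro rfl
      exact ⟨_, isAlignment_nil_left t, by simp [alignScore, List.map_map, Function.comp_def]⟩
  rw [this, csInf_singleton]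

end Aux

section Main
variable {σ : Type*} [Fintype σ] (γ : Scoring σ)

lemma ndist_rep_nil (b : σ) {n : ℕ} (hn : n ≠ 0) :
    ndist γ (List.replicate n b) [] = γ (some b) none := by
  rw [ndist_nil_right γ _ (by simp [hn])]
  have hn' : (n : ℝ) ≠ 0 := Nat.cast_ne_zero.mpr hn
  simp [List.map_replicate, List.sum_replicate, nsmul_eq_mul]
  field_simp

lemma ndist_nil_rep (b : σ) {n : ℕ} (hn : n ≠ 0) :
    ndist γ [] (List.replicate n b) = γ none (some b) := by
  rw [ndist_nil_left γ _ (by simp [hn])]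
  have hn' : (n : ℝ) ≠ 0 := Nat.cast_ne_zero.mpr hn
  simp [List.map_replicate, List.sum_replicate, nsmul_eq_mul]
  field_simp

lemma isAlignment_mixed1 (a b : σ) (n : ℕ) :
    IsAlignment (((some a : Option σ), (none : Option σ)) ::
      List.replicate n ((none : Option σ), (some b : Option σ))) [a] (List.replicate n b) := by
  refine ⟨?_, ?_, ?_⟩
  · intro c hc
    simp only [List.mem_cons, List.mem_replicate] at hc
    rcases hc with rfl | ⟨-, rfl⟩ <;> simp
  · simp [List.filterMap_cons, List.filterMap_replicate]
  · simp [List.filterMap_cons, List.filterMap_replicate]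

lemma isAlignment_mixed2 (a b : σ) (n : ℕ) :
    IsAlignment (((none : Option σ), (some a : Option σ)) ::
      List.replicate n ((some b : Option σ), (none : Option σ))) (List.replicate n b) [a] := by
  refine ⟨?_, ?_, ?_⟩
  · intro c hc
    simp only [List.mem_cons, List.mem_replicate] at hc
    rcases hc with rfl | ⟨-, rfl⟩ <;> simp
  · simp [List.filterMap_cons, List.filterMap_replicate]
  · simp [List.filterMap_cons, List.filterMap_replicate]

end Main


theorem stmt12 {σ : Type*} [Fintype σ] (γ : Scoring σ)
    (hpre : IsPremetric (ndist γ))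
    (htri : ∀ s t u : List σ, ndist γ s t ≤ ndist γ s u + ndist γ u t) :
    ∀ a b : σ,
      max (γ (some a) none) (γ none (some a)) ≤ γ (some b) none + γ none (some b) := by
  intro a b
  set X := γ (some a) none with hX
  set Y := γ none (some a) with hY
  set P := γ (some b) none with hP
  set Q := γ none (some b) with hQ
  have hXv : ndist γ [a] [] = X := by
    rw [show ([a] : List σ) = List.replicate 1 a by simp, ndist_rep_nil γ a one_ne_zero]
  have hYv : ndist γ [] [a] = Y := by
    rw [show ([a] : List σ) = List.replicate 1 a by simp, ndist_nil_rep γ a one_ne_zero]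
  have hP0 : 0 ≤ P := by
    have := hpre.2 (List.replicate 1 b) []
    rwa [ndist_rep_nil γ b one_ne_zero] at this
  have hQ0 : 0 ≤ Q := by
    have := hpre.2 [] (List.replicate 1 b)
    rwa [ndist_nil_rep γ b one_ne_zero] at this
  have key : ∀ n : ℕ, n ≠ 0 → X ≤ Q + P + P / n ∧ Y ≤ Q + P + Q / n := by
    intro n hn
    have hn' : (0:ℝ) < n := by
      have : 0 < n := Nat.pos_of_ne_zero hn
      exact_mod_cast this
    have hn1 : (0:ℝ) < (n:ℝ) + 1 := by positivity
    have hsc1 : alignScore γ (((some a : Option σ), (none : Option σ)) ::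
        List.replicate n ((none : Option σ), (some b : Option σ))) = X + n * Q := by
      simp [alignScore, List.map_replicate, List.sum_replicate, nsmul_eq_mul]
      rfl
    have hsc2 : alignScore γ (((none : Option σ), (some a : Option σ)) ::
        List.replicate n ((some b : Option σ), (none : Option σ))) = Y + n * P := by
      simp [alignScore, List.map_replicate, List.sum_replicate, nsmul_eq_mul]
      rfl
    have h1 : ndist γ [a] (List.replicate n b) ≤ (X + n * Q) / (n + 1) := by
      have := ndist_le γ (isAlignment_mixed1 a b n)
      rwa [hsc1, show ((((some a : Option σ), (none : Option σ)) ::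
        List.replicate n ((none : Option σ), (some b : Option σ))).length : ℝ) = n + 1 by simp]
        at this
    have h2 : ndist γ (List.replicate n b) [a] ≤ (Y + n * P) / (n + 1) := by
      have := ndist_le γ (isAlignment_mixed2 a b n)
      rwa [hsc2, show ((((none : Option σ), (some a : Option σ)) ::
        List.replicate n ((some b : Option σ), (none : Option σ))).length : ℝ) = n + 1 by simp]
        at this
    have T1 : X ≤ (X + n * Q) / (n + 1) + P := by
      calc X = ndist γ [a] [] := hXv.symm
        _ ≤ ndist γ [a] (List.replicate n b) + ndist γ (List.replicate n b) [] :=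
            htri _ _ _
        _ ≤ (X + n * Q) / (n + 1) + P := by
            rw [ndist_rep_nil γ b hn]; exact add_le_add_left h1 _
    have T2 : Y ≤ Q + (Y + n * P) / (n + 1) := by
      calc Y = ndist γ [] [a] := hYv.symm
        _ ≤ ndist γ [] (List.replicate n b) + ndist γ (List.replicate n b) [a] :=
            htri _ _ _
        _ ≤ Q + (Y + n * P) / (n + 1) := by
            rw [ndist_nil_rep γ b hn]; exact add_le_add_right h2 _
    have T1' : (X - P) * ((n:ℝ) + 1) ≤ X + n * Q := by
      rw [← le_div_iff₀ hn1]; linarith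
    have T2' : (Y - Q) * ((n:ℝ) + 1) ≤ Y + n * P := by
      rw [← le_div_iff₀ hn1]; linarith
    constructor
    · have h : (X - (Q + P)) * n ≤ P := by nlinarith
      have := (le_div_iff₀ hn').mpr h
      linarith
    · have h : (Y - (Q + P)) * n ≤ Q := by nlinarith
      have := (le_div_iff₀ hn').mpr h
      linarith
  have final : ∀ (Z C : ℝ), 0 ≤ C → (∀ n : ℕ, n ≠ 0 → Z ≤ Q + P + C / n) → Z ≤ P + Q := by
    intro Z C hC hZ
    refine le_of_forall_pos_le_add fun ε hε => ?_
    obtain ⟨n, hn⟩ := exists_nat_gt (C / ε)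
    have hn0 : n ≠ 0 := by
      rintro rfl
      simp only [Nat.cast_zero] at hn
      exact absurd hn (not_lt.mpr (div_nonneg hC hε.le))
    have hn' : (0:ℝ) < n := by
      have : 0 < n := Nat.pos_of_ne_zero hn0
      exact_mod_cast this
    have hCn : C / n < ε := by
      rw [div_lt_iff₀ hn']
      rw [div_lt_iff₀ hε] at hn
      linarith
    have := hZ n hn0
    linarith
  rw [max_le_iff]
  exact ⟨final X P hP0 fun n hn => (key n hn).1, final Y Q hQ0 fun n hn => (key n hn).2⟩
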